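/- The compositional inverse of t·exp(−t) is the tree function T(t) = Σ_{n≥1} n^{n-1} t^n/n!, i.e. T(t)exp(−T(t)) = t. -/

import Mathlib

noncomputable section

/-- Composition `f(a)` of formal power series (the substitution of `a` into `f`,
valid when `a` has zero constant term). -/
def pcomp {R : Type*} [CommRing R] (f a : PowerSeries R) : PowerSeries R :=
  PowerSeries.mk fun n =>
    PowerSeries.coeff n (∑ k ∈ Finset.range (n + 1),
      PowerSeries.C (PowerSeries.coeff k f) * a ^ k)

/-- The tree function `T(t) = Σ_{n≥1} n^{n-1} tⁿ/n!`. -/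
def treeFun : PowerSeries ℚ :=
  PowerSeries.mk fun n => if n = 0 then 0 else (n ^ (n - 1) : ℚ) / n.factorial

section Aux

open PowerSeries Finset

variable {R : Type*} [CommRing R]

lemma coeff_pcomp (f a : PowerSeries R) (n : ℕ) :
    PowerSeries.coeff n (pcomp f a)
      = ∑ k ∈ range (n + 1), PowerSeries.coeff k f * PowerSeries.coeff n (a ^ k) := by
  simp [pcomp, coeff_mk, coeff_C_mul]

lemma coeff_pow_eq_zero {a : PowerSeries R} (ha : PowerSeries.constantCoeff a = 0)
    {n k : ℕ} (h : n < k) : PowerSeries.coeff n (a ^ k) = 0 := by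
  have : (X : PowerSeries R) ^ k ∣ a ^ k := pow_dvd_pow_of_dvd (X_dvd_iff.mpr ha) k
  exact (X_pow_dvd_iff.mp this) n h

lemma coeff_peval {a : PowerSeries R} (ha : PowerSeries.constantCoeff a = 0)
    (p : Polynomial R) (n : ℕ) :
    PowerSeries.coeff n (p.eval₂ (PowerSeries.C) a)
      = ∑ k ∈ range (n + 1), p.coeff k * PowerSeries.coeff n (a ^ k) := by
  rw [Polynomial.eval₂_eq_sum_range' (PowerSeries.C)
    (lt_of_lt_of_le (Nat.lt_succ_self _) (le_max_right (n + 1) _)) a]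
  rw [map_sum]
  rw [← Finset.sum_subset (Finset.range_subset_range.mpr (le_max_left (n + 1) (p.natDegree + 1)))]
  · exact Finset.sum_congr rfl fun k _ => by rw [PowerSeries.coeff_C_mul]
  · intro k _ hk
    rw [PowerSeries.coeff_C_mul, coeff_pow_eq_zero ha (by simpa using hk), mul_zero]

lemma coeff_pcomp_peval {a : PowerSeries R} (ha : PowerSeries.constantCoeff a = 0)
    {f : PowerSeries R} {n : ℕ} {q : Polynomial R}
    (hq : ∀ k ≤ n, q.coeff k = PowerSeries.coeff k f) :
    PowerSeries.coeff n (pcomp f a)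
      = PowerSeries.coeff n (q.eval₂ (PowerSeries.C) a) := by
  rw [coeff_pcomp, coeff_peval ha]
  exact Finset.sum_congr rfl fun k hk =>
    by rw [hq k (Nat.lt_succ_iff.mp (Finset.mem_range.mp hk))]

lemma pcomp_mul {a : PowerSeries R} (ha : PowerSeries.constantCoeff a = 0)
    (f g : PowerSeries R) :
    pcomp (f * g) a = pcomp f a * pcomp g a := by
  ext n
  have hP : ∀ k ≤ n, (trunc (n+1) f).coeff k = PowerSeries.coeff k f := fun k hk => by
    rw [coeff_trunc]; simp [Nat.lt_succ_iff.mpr hk]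
  have hQ : ∀ k ≤ n, (trunc (n+1) g).coeff k = PowerSeries.coeff k g := fun k hk => by
    rw [coeff_trunc]; simp [Nat.lt_succ_iff.mpr hk]
  have hPQ : ∀ k ≤ n, (trunc (n+1) f * trunc (n+1) g).coeff k
      = PowerSeries.coeff k (f * g) := by
    intro k hk
    rw [Polynomial.coeff_mul, PowerSeries.coeff_mul]
    refine Finset.sum_congr rfl fun p hp => ?_
    have hpk := Finset.HasAntidiagonal.mem_antidiagonal.mp hp
    rw [hP p.1 (by omega), hQ p.2 (by omega)]
  rw [coeff_pcomp_peval ha hPQ, Polynomial.eval₂_mul, PowerSeries.coeff_mul,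
    PowerSeries.coeff_mul]
  refine Finset.sum_congr rfl fun p hp => ?_
  have hpn := Finset.HasAntidiagonal.mem_antidiagonal.mp hp
  rw [coeff_pcomp_peval ha (f := f) (n := p.1) (fun k hk => hP k (by omega)),
    coeff_pcomp_peval ha (f := g) (n := p.2) (fun k hk => hQ k (by omega))]

lemma pcomp_one (a : PowerSeries R) : pcomp 1 a = 1 := by
  ext n
  rw [coeff_pcomp, Finset.sum_eq_single 0]
  · simp
  · intro k hk h0
    rw [PowerSeries.coeff_one, if_neg h0, zero_mul]
  · simp

lemma pcomp_neg (f a : PowerSeries R) : pcomp (-f) a = -(pcomp f a) := by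
  ext n
  simp [coeff_pcomp, Finset.sum_neg_distrib]

lemma pcomp_X {a : PowerSeries R} (ha : PowerSeries.constantCoeff a = 0) :
    pcomp PowerSeries.X a = a := by
  ext n
  rw [coeff_pcomp, Finset.sum_eq_single 1]
  · cases n with
    | zero => simp [PowerSeries.coeff_zero_eq_constantCoeff, ha]
    | succ m => simp
  · intro k hk h1
    rw [PowerSeries.coeff_X, if_neg h1, zero_mul]
  · intro h
    simp only [Finset.mem_range, not_lt] at h
    have hn : n = 0 := by omega
    subst hn
    simp [PowerSeries.coeff_zero_eq_constantCoeff, ha]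

lemma constantCoeff_pcomp (f a : PowerSeries R) :
    PowerSeries.constantCoeff (pcomp f a) = PowerSeries.constantCoeff f := by
  rw [← PowerSeries.coeff_zero_eq_constantCoeff_apply, coeff_pcomp]
  simp

lemma pcomp_X_right (f : PowerSeries R) : pcomp f PowerSeries.X = f := by
  ext n
  rw [coeff_pcomp, Finset.sum_eq_single n]
  · simp [PowerSeries.coeff_X_pow]
  · intro k hk hne
    rw [PowerSeries.coeff_X_pow, if_neg (fun h => hne h.symm), mul_zero]
  · intro h; simp at h

lemma pcomp_pow {b : PowerSeries R} (hb : PowerSeries.constantCoeff b = 0)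
    (a : PowerSeries R) (j : ℕ) : pcomp (a ^ j) b = (pcomp a b) ^ j := by
  induction j with
  | zero => simpa using pcomp_one b
  | succ m ih => rw [pow_succ, pcomp_mul hb, ih, pow_succ]

lemma pcomp_assoc {a b : PowerSeries R} (ha : PowerSeries.constantCoeff a = 0)
    (hb : PowerSeries.constantCoeff b = 0) (f : PowerSeries R) :
    pcomp (pcomp f a) b = pcomp f (pcomp a b) := by
  ext n
  rw [coeff_pcomp, coeff_pcomp]
  have key : ∀ j, PowerSeries.coeff n ((pcomp a b) ^ j)
      = ∑ k ∈ range (n + 1), PowerSeries.coeff k (a ^ j) * PowerSeries.coeff n (b ^ k) := by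
    intro j
    rw [← pcomp_pow hb, coeff_pcomp]
  simp_rw [key, coeff_pcomp, Finset.sum_mul, Finset.mul_sum]
  rw [Finset.sum_comm]
  refine Finset.sum_congr rfl fun k hk => ?_
  have hkn : k < n + 1 := Finset.mem_range.mp hk
  rw [Finset.sum_subset (Finset.range_subset_range.mpr (by omega : k + 1 ≤ n + 1))
    (fun j _ hj => by
      have hkj : k < j := by simp only [Finset.mem_range, not_lt] at hj; omega
      rw [coeff_pow_eq_zero ha hkj, mul_zero, zero_mul])]
  exact Finset.sum_congr rfl fun j _ => by ring

end Aux

open PowerSeries Finset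

lemma coeff_treeFun (n : ℕ) : PowerSeries.coeff n treeFun
    = if n = 0 then 0 else (n ^ (n - 1) : ℚ) / n.factorial := by
  simp [treeFun, coeff_mk]

lemma coeff_treeFun_zero : PowerSeries.coeff 0 treeFun = 0 := by simp [coeff_treeFun]

lemma coeff_treeFun_one : PowerSeries.coeff 1 treeFun = 1 := by norm_num [coeff_treeFun]

lemma pow_coeff_agree {u v : PowerSeries ℚ}
    (hu : PowerSeries.constantCoeff u = 0) (hv : PowerSeries.constantCoeff v = 0)
    {n : ℕ} (hag : ∀ m < n, PowerSeries.coeff m u = PowerSeries.coeff m v) :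
    ∀ (k : ℕ) (m : ℕ), m ≤ n → (2 ≤ k ∨ m < n) →
      PowerSeries.coeff m (u ^ k) = PowerSeries.coeff m (v ^ k) := by
  intro k
  induction k with
  | zero => intro m _ _; rw [pow_zero, pow_zero]
  | succ k ih =>
    intro m hmn hor
    rw [pow_succ', pow_succ', PowerSeries.coeff_mul, PowerSeries.coeff_mul]
    refine Finset.sum_congr rfl fun p hp => ?_
    have hpm := Finset.HasAntidiagonal.mem_antidiagonal.mp hp
    by_cases h0 : p.1 = 0
    · have hzu : PowerSeries.coeff p.1 u = 0 := by
        rw [h0, PowerSeries.coeff_zero_eq_constantCoeff, hu]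
      have hzv : PowerSeries.coeff p.1 v = 0 := by
        rw [h0, PowerSeries.coeff_zero_eq_constantCoeff, hv]
      rw [hzu, hzv, zero_mul, zero_mul]
    · have hp2 : p.2 < n := by omega
      have hpow : PowerSeries.coeff p.2 (u ^ k) = PowerSeries.coeff p.2 (v ^ k) := by
        rcases Nat.eq_zero_or_pos k with rfl | hk
        · rw [pow_zero, pow_zero]
        · exact ih p.2 (by omega) (Or.inr hp2)
      by_cases hp1 : p.1 < n
      · rw [hag p.1 hp1, hpow]
      · have hk1 : 1 ≤ k := by rcases hor with h | h <;> omega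
        have h2z : p.2 = 0 := by omega
        have hzu : PowerSeries.coeff p.2 (u ^ k) = 0 := by
          rw [h2z, PowerSeries.coeff_zero_eq_constantCoeff, map_pow, hu,
            zero_pow (by omega : k ≠ 0)]
        have hzv : PowerSeries.coeff p.2 (v ^ k) = 0 := by
          rw [h2z, PowerSeries.coeff_zero_eq_constantCoeff, map_pow, hv,
            zero_pow (by omega : k ≠ 0)]
        rw [hzu, hzv, mul_zero, mul_zero]

lemma pcomp_treeFun_inj {u v : PowerSeries ℚ}
    (hu : PowerSeries.constantCoeff u = 0) (hv : PowerSeries.constantCoeff v = 0)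
    (h : pcomp treeFun u = pcomp treeFun v) : u = v := by
  ext n
  induction n using Nat.strong_induction_on with
  | _ n ih =>
    rcases Nat.eq_zero_or_pos n with rfl | hn
    · rw [PowerSeries.coeff_zero_eq_constantCoeff, hu, hv]
    have hcn := congrArg (PowerSeries.coeff n) h
    rw [coeff_pcomp, coeff_pcomp] at hcn
    have h1mem : 1 ∈ range (n + 1) := by simp; omega
    rw [← Finset.add_sum_erase _ _ h1mem, ← Finset.add_sum_erase _ _ h1mem] at hcn
    have hrest : ∀ k ∈ (range (n + 1)).erase 1,
        PowerSeries.coeff k treeFun * PowerSeries.coeff n (u ^ k)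
          = PowerSeries.coeff k treeFun * PowerSeries.coeff n (v ^ k) := by
      intro k hk
      have hk1 : k ≠ 1 := (Finset.mem_erase.mp hk).1
      rcases Nat.eq_zero_or_pos k with rfl | hkp
      · rw [coeff_treeFun_zero, zero_mul, zero_mul]
      · have : 2 ≤ k := by omega
        rw [pow_coeff_agree hu hv (fun m hm => ih m hm) k n le_rfl (Or.inl this)]
    rw [Finset.sum_congr rfl hrest] at hcn
    have := add_right_cancel hcn
    rw [coeff_treeFun_one, one_mul, one_mul, pow_one, pow_one] at this
    exact this

lemma fwdDiff_pow_eq_zero : ∀ (m n : ℕ), m < n → ∀ (y : ℕ),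
    (fwdDiff (1:ℕ))^[n] (fun x : ℕ => (x : ℚ) ^ m) y = 0 := by
  intro m
  induction m using Nat.strong_induction_on with
  | _ m ihm =>
    intro n hmn y
    obtain ⟨n', rfl⟩ : ∃ n', n = n' + 1 := ⟨n - 1, by omega⟩
    rw [Function.iterate_succ_apply]
    have hΔ : fwdDiff (1:ℕ) (fun x : ℕ => (x : ℚ) ^ m)
        = ∑ j ∈ range m, (m.choose j : ℚ) • (fun x : ℕ => (x : ℚ) ^ j) := by
      funext x
      simp only [fwdDiff, Finset.sum_apply, Pi.smul_apply, smul_eq_mul]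
      push_cast
      rw [add_pow]
      rw [Finset.sum_range_succ]
      simp [mul_comm]
    rw [hΔ, fwdDiff_iter_finset_sum]
    rw [Finset.sum_apply]
    refine Finset.sum_eq_zero fun j hj => ?_
    have hjm := Finset.mem_range.mp hj
    rw [fwdDiff_iter_const_smul]
    have := ihm j hjm n' (by omega) y
    simp [this]

lemma alt_sum_pow_eq_zero {m n : ℕ} (hmn : m < n) :
    ∑ k ∈ range (n + 1), (-1 : ℚ) ^ (n - k) * (n.choose k) * (k : ℚ) ^ m = 0 := by
  have h := fwdDiff_iter_eq_sum_shift (1 : ℕ) (fun x : ℕ => (x : ℚ) ^ m) n 0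
  rw [fwdDiff_pow_eq_zero m n hmn 0] at h
  rw [← h.symm]
  refine Finset.sum_congr rfl fun k _ => ?_
  rw [zsmul_eq_mul]
  simp only [zero_add, smul_eq_mul, mul_one]
  push_cast
  ring

lemma coeff_neg_X_pow (k n : ℕ) :
    PowerSeries.coeff n ((-PowerSeries.X) ^ k)
      = (-1 : ℚ) ^ k * PowerSeries.coeff n (PowerSeries.X ^ k) := by
  rcases Nat.even_or_odd k with hk | hk
  · rw [hk.neg_pow, hk.neg_one_pow, one_mul]
  · rw [hk.neg_pow, hk.neg_one_pow, map_neg, neg_one_mul]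

lemma pcomp_exp_negX :
    pcomp (PowerSeries.exp ℚ) (-PowerSeries.X)
      = PowerSeries.rescale (-1) (PowerSeries.exp ℚ) := by
  ext n
  rw [coeff_pcomp, coeff_rescale, Finset.sum_eq_single n]
  · rw [coeff_neg_X_pow, PowerSeries.coeff_X_pow, if_pos rfl, mul_one, mul_comm]
  · intro k _ hkn
    rw [coeff_neg_X_pow, PowerSeries.coeff_X_pow, if_neg (fun h => hkn h.symm),
      mul_zero, mul_zero]
  · intro h; simp at h

lemma rescale_exp_pow (k : ℕ) :
    (PowerSeries.rescale (-1 : ℚ) (PowerSeries.exp ℚ)) ^ k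
      = PowerSeries.rescale (-(k : ℚ)) (PowerSeries.exp ℚ) := by
  rw [← map_pow, PowerSeries.exp_pow_eq_rescale_exp, PowerSeries.rescale_rescale]
  norm_num [mul_comm]

-- the key: coefficient of g^k
lemma coeff_g_pow (n k : ℕ) :
    PowerSeries.coeff n ((PowerSeries.X * PowerSeries.rescale (-1) (PowerSeries.exp ℚ)) ^ k)
      = if k ≤ n then (-(k : ℚ)) ^ (n - k) / (n - k).factorial else 0 := by
  rw [mul_pow, rescale_exp_pow, PowerSeries.coeff_X_pow_mul']
  split_ifs with h
  · rw [coeff_rescale, PowerSeries.coeff_exp]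
    simp [div_eq_mul_inv]
  · rfl

lemma term_eq {n k : ℕ} (hn : 2 ≤ n) (hkn : k ≤ n) :
    PowerSeries.coeff k treeFun *
        ((-(k : ℚ)) ^ (n - k) / (n - k).factorial)
      = ((-1 : ℚ) ^ (n - k) * (n.choose k) * (k : ℚ) ^ (n - 1)) / n.factorial := by
  have hneg : (-(k : ℚ)) ^ (n - k) = (-1 : ℚ) ^ (n - k) * (k : ℚ) ^ (n - k) := by
    rw [← neg_one_mul, mul_pow]
  rw [coeff_treeFun, hneg]
  rcases Nat.eq_zero_or_pos k with rfl | hkp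
  · norm_num
    rw [zero_pow (by omega : n - 1 ≠ 0)]
    ring
  · rw [if_neg (by omega)]
    have hpow : (k : ℚ) ^ (k - 1) * (k : ℚ) ^ (n - k) = (k : ℚ) ^ (n - 1) := by
      rw [← pow_add]; congr 1; omega
    have hchoose : (n.choose k : ℚ) = n.factorial / (k.factorial * (n - k).factorial) :=
      Nat.cast_choose ℚ hkn
    have hk0 : (k.factorial : ℚ) ≠ 0 := Nat.cast_ne_zero.mpr k.factorial_ne_zero
    have hnk0 : ((n - k).factorial : ℚ) ≠ 0 := Nat.cast_ne_zero.mpr (n - k).factorial_ne_zero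
    have hn0 : (n.factorial : ℚ) ≠ 0 := Nat.cast_ne_zero.mpr n.factorial_ne_zero
    rw [hchoose]
    field_simp
    linear_combination hpow

lemma sum_vanish {n : ℕ} (hn : 2 ≤ n) :
    ∑ k ∈ range (n + 1), PowerSeries.coeff k treeFun *
      PowerSeries.coeff n ((PowerSeries.X * PowerSeries.rescale (-1) (PowerSeries.exp ℚ)) ^ k)
      = 0 := by
  have hterm : ∀ k ∈ range (n + 1),
      PowerSeries.coeff k treeFun *
        PowerSeries.coeff n ((PowerSeries.X * PowerSeries.rescale (-1) (PowerSeries.exp ℚ)) ^ k)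
      = ((-1 : ℚ) ^ (n - k) * (n.choose k) * (k : ℚ) ^ (n - 1)) / n.factorial := by
    intro k hk
    have hkn : k ≤ n := by
      have := Finset.mem_range.mp hk; omega
    rw [coeff_g_pow, if_pos hkn, term_eq hn hkn]
  rw [Finset.sum_congr rfl hterm, ← Finset.sum_div,
    alt_sum_pow_eq_zero (by omega : n - 1 < n), zero_div]

lemma part1 :
    pcomp treeFun (PowerSeries.X * pcomp (PowerSeries.exp ℚ) (-PowerSeries.X))
      = PowerSeries.X := by
  rw [pcomp_exp_negX]
  ext n
  rw [coeff_pcomp, PowerSeries.coeff_X]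
  rcases n with _ | n
  · simp [coeff_g_pow, coeff_treeFun]
  rcases n with _ | n
  · rw [if_pos rfl, Finset.sum_range_succ, Finset.sum_range_one]
    simp [coeff_g_pow, coeff_treeFun]
  · rw [if_neg (by omega), sum_vanish (by omega)]

/-- The compositional inverse of `t·exp(−t)` is the tree function
`T(t) = Σ_{n≥1} n^{n-1} tⁿ/n!`, i.e. `T(t·e^{−t}) = t` and `T(t)·exp(−T(t)) = t`. -/
theorem tree_function_inverse :
    pcomp treeFun (PowerSeries.X * pcomp (PowerSeries.exp ℚ) (-PowerSeries.X))
      = PowerSeries.X ∧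
    treeFun * pcomp (PowerSeries.exp ℚ) (-treeFun) = PowerSeries.X := by
  have hT : PowerSeries.constantCoeff treeFun = 0 := by
    rw [← PowerSeries.coeff_zero_eq_constantCoeff_apply, coeff_treeFun_zero]
  have hE := pcomp_exp_negX
  set g : PowerSeries ℚ := PowerSeries.X * pcomp (PowerSeries.exp ℚ) (-PowerSeries.X) with hgdef
  have hg : PowerSeries.constantCoeff g = 0 := by
    rw [hgdef, map_mul, PowerSeries.constantCoeff_X, zero_mul]
  have h1 : pcomp treeFun g = PowerSeries.X := part1
  refine ⟨h1, ?_⟩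
  have hXneg : PowerSeries.constantCoeff (-PowerSeries.X : PowerSeries ℚ) = 0 := by
    rw [map_neg, PowerSeries.constantCoeff_X, neg_zero]
  -- u := g ∘ treeFun
  have hu : PowerSeries.constantCoeff (pcomp g treeFun) = 0 := by
    rw [constantCoeff_pcomp, hg]
  have hkey : pcomp treeFun (pcomp g treeFun) = pcomp treeFun PowerSeries.X := by
    rw [← pcomp_assoc hg hT, h1, pcomp_X hT, pcomp_X_right]
  have hux : pcomp g treeFun = PowerSeries.X :=
    pcomp_treeFun_inj hu PowerSeries.constantCoeff_X hkey
  have hexpand : pcomp g treeFun = treeFun * pcomp (PowerSeries.exp ℚ) (-treeFun) := by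
    rw [hgdef, pcomp_mul hT, pcomp_X hT]
    congr 1
    rw [pcomp_assoc hXneg hT, pcomp_neg, pcomp_X hT]
  rw [← hexpand, hux]
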